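/- arXiv:2304.02590 — 2 statements merged into one kernel-verified Lean document; each statement's English description precedes it below -/
import Mathlib

section
/- Let A and B be stable matching instances on the same n workers and n firms such that every worker has the same preference order in A as in B. If the set M_A ∩ M_B of matchings stable under both A and B is nonempty, then it contains a worker-optimal matching M*: a matching M* ∈ M_A ∩ M_B such that for every M ∈ M_A ∩ M_B and every worker w, w weakly prefers M*(w) to M(w). -/
/-- A stable matching instance on `n` workers and `n` firms: each worker `w` has a strict
total preference order over firms encoded by an injective rank function `wRank w`
(lower rank = more preferred), and each firm `f` has one over workers (`fRank f`). -/
structure SMInstance (n : ℕ) where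
  wRank : Fin n → Fin n → Fin n
  fRank : Fin n → Fin n → Fin n
  wRank_inj : ∀ w, Function.Injective (wRank w)
  fRank_inj : ∀ f, Function.Injective (fRank f)

/-- `(w, f)` is a blocking pair of the matching `M` under instance `I`:
`M w ≠ f`, `w` strictly prefers `f` to `M w`, and `f` strictly prefers `w`
to its `M`-partner (the worker `w'` with `M w' = f`). -/
def Blocking {n : ℕ} (I : SMInstance n) (M : Fin n → Fin n) (w f : Fin n) : Prop :=
  M w ≠ f ∧ I.wRank w f < I.wRank w (M w) ∧
    ∃ w', M w' = f ∧ I.fRank f w < I.fRank f w'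

/-- A matching (bijection) is stable under `I` if it has no blocking pair. -/
def IsStable {n : ℕ} (I : SMInstance n) (M : Fin n → Fin n) : Prop :=
  Function.Bijective M ∧ ∀ w f, ¬ Blocking I M w f

/-- The join `M₁ ∨_I M₂`: each worker gets its less preferred partner. -/
def joinMap {n : ℕ} (I : SMInstance n) (M₁ M₂ : Fin n → Fin n) : Fin n → Fin n :=
  fun w => if I.wRank w (M₁ w) < I.wRank w (M₂ w) then M₂ w else M₁ w

/-- The meet `M₁ ∧_I M₂`: each worker gets its more preferred partner. -/
def meetMap {n : ℕ} (I : SMInstance n) (M₁ M₂ : Fin n → Fin n) : Fin n → Fin n :=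
  fun w => if I.wRank w (M₁ w) < I.wRank w (M₂ w) then M₁ w else M₂ w

lemma inj_aux {n : ℕ} (I : SMInstance n) {M₁ M₂ : Fin n → Fin n}
    (h₁ : IsStable I M₁) (h₂ : IsStable I M₂) {w w' : Fin n} (hne : w ≠ w')
    (heq : M₁ w = M₂ w')
    (hw : I.wRank w (M₁ w) ≤ I.wRank w (M₂ w))
    (hw' : I.wRank w' (M₂ w') ≤ I.wRank w' (M₁ w')) : False := by
  set f := M₁ w with hf
  have hM1w' : M₁ w' ≠ f := fun h => hne (h₁.1.injective (h.symm ▸ rfl)).symm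
  have hM2w : M₂ w ≠ f := fun h => hne (h₂.1.injective (h.trans heq))
  have hlt1 : I.wRank w f < I.wRank w (M₂ w) :=
    lt_of_le_of_ne hw (fun h => hM2w (I.wRank_inj w h).symm)
  have hlt2 : I.wRank w' f < I.wRank w' (M₁ w') := by
    rw [← heq] at hw'
    exact lt_of_le_of_ne hw' (fun h => hM1w' (I.wRank_inj w' h).symm)
  rcases lt_or_gt_of_ne (fun h : I.fRank f w = I.fRank f w' => hne (I.fRank_inj f h)) with h | h
  · exact h₂.2 w f ⟨hM2w, hlt1, w', heq.symm, h⟩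
  · exact h₁.2 w' f ⟨hM1w', hlt2, w, rfl, h⟩

lemma meet_stable {n : ℕ} (I : SMInstance n) {M₁ M₂ : Fin n → Fin n}
    (h₁ : IsStable I M₁) (h₂ : IsStable I M₂) : IsStable I (meetMap I M₁ M₂) := by
  set M := meetMap I M₁ M₂ with hM
  have hmem : ∀ w, M w = M₁ w ∨ M w = M₂ w := by
    intro w; simp only [hM, meetMap]; split <;> [left; right] <;> rfl
  have hle₁ : ∀ w, I.wRank w (M w) ≤ I.wRank w (M₁ w) := by
    intro w; simp only [hM, meetMap]; split
    · exact le_refl _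
    · exact le_of_not_gt (by assumption)
  have hle₂ : ∀ w, I.wRank w (M w) ≤ I.wRank w (M₂ w) := by
    intro w; simp only [hM, meetMap]; split
    · exact le_of_lt (by assumption)
    · exact le_refl _
  have hinj : Function.Injective M := by
    intro w w' hww'
    by_contra hne
    rcases hmem w with hw | hw <;> rcases hmem w' with hw' | hw'
    · exact hne (h₁.1.injective (hw ▸ hw' ▸ hww'))
    · refine inj_aux I h₁ h₂ hne ?_ ?_ ?_
      · rw [← hw, ← hw', hww']
      · rw [← hw]; exact hle₂ w
      · rw [← hw']; exact hle₁ w'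
    · refine inj_aux I h₁ h₂ (Ne.symm hne) ?_ ?_ ?_
      · rw [← hw', ← hw, hww']
      · rw [← hw']; exact hle₂ w'
      · rw [← hw]; exact hle₁ w
    · exact hne (h₂.1.injective (hw ▸ hw' ▸ hww'))
  refine ⟨Finite.injective_iff_bijective.mp hinj, ?_⟩
  rintro w f ⟨hnef, hlt, w', hw', hfr⟩
  rcases hmem w' with h | h
  · refine h₁.2 w f ⟨?_, lt_of_lt_of_le hlt (hle₁ w), w', h ▸ hw', hfr⟩
    intro hc
    exact absurd (hc ▸ lt_of_lt_of_le hlt (hle₁ w)) (lt_irrefl _)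
  · refine h₂.2 w f ⟨?_, lt_of_lt_of_le hlt (hle₂ w), w', h ▸ hw', hfr⟩
    intro hc
    exact absurd (hc ▸ lt_of_lt_of_le hlt (hle₂ w)) (lt_irrefl _)

/-- if A and B have identical worker preferences and some matching is
stable under both, then there is a worker-optimal matching stable under both. -/
theorem stmt2 {n : ℕ} (hn : 1 ≤ n) (A B : SMInstance n)
    (hW : A.wRank = B.wRank)
    (hne : ∃ M, IsStable A M ∧ IsStable B M) :
    ∃ Mstar, (IsStable A Mstar ∧ IsStable B Mstar) ∧
      ∀ M, (IsStable A M ∧ IsStable B M) →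
        ∀ w, A.wRank w (Mstar w) ≤ A.wRank w (M w) := by
  classical
  set S : Finset (Fin n → Fin n) :=
    Finset.univ.filter (fun M => IsStable A M ∧ IsStable B M) with hS
  obtain ⟨M₀, hM₀⟩ := hne
  have hS0 : M₀ ∈ S := by simp [hS, hM₀]
  obtain ⟨Ms, hMs, hmin⟩ := S.exists_min_image
    (fun M => ∑ w, (A.wRank w (M w) : ℕ)) ⟨M₀, hS0⟩
  have hMsS : IsStable A Ms ∧ IsStable B Ms := by
    simpa [hS] using hMs
  refine ⟨Ms, hMsS, ?_⟩
  intro M hMst w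
  set N := meetMap A Ms M with hN
  have hmeetB : meetMap B Ms M = N := by
    rw [hN]; unfold meetMap; rw [hW]
  have hNA : IsStable A N := meet_stable A hMsS.1 hMst.1
  have hNB : IsStable B N := hmeetB ▸ meet_stable B hMsS.2 hMst.2
  have hNS : N ∈ S := by simp [hS, hNA, hNB]
  have hle : ∀ v, A.wRank v (N v) ≤ A.wRank v (Ms v) := by
    intro v; simp only [hN, meetMap]; split
    · exact le_refl _
    · exact le_of_not_gt (by assumption)
  have hle' : ∀ v, A.wRank v (N v) ≤ A.wRank v (M v) := by
    intro v; simp only [hN, meetMap]; split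
    · exact le_of_lt (by assumption)
    · exact le_refl _
  have hsum1 : ∑ v, (A.wRank v (Ms v) : ℕ) ≤ ∑ v, (A.wRank v (N v) : ℕ) := hmin N hNS
  have hsum2 : ∑ v, (A.wRank v (N v) : ℕ) ≤ ∑ v, (A.wRank v (Ms v) : ℕ) :=
    Finset.sum_le_sum (fun v _ => hle v)
  have hsum : ∑ v, (A.wRank v (N v) : ℕ) = ∑ v, (A.wRank v (Ms v) : ℕ) :=
    le_antisymm hsum2 hsum1
  have heqw : (A.wRank w (N w) : ℕ) = (A.wRank w (Ms w) : ℕ) :=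
    (Finset.sum_eq_sum_iff_of_le (f := fun v => (A.wRank v (N v) : ℕ)) (g := fun v => (A.wRank v (Ms v) : ℕ)) (fun v _ => hle v)).mp hsum w (Finset.mem_univ w)
  calc A.wRank w (Ms w) = A.wRank w (N w) := by
        exact Fin.ext heqw.symm
    _ ≤ A.wRank w (M w) := hle' w
end

section
/- There exist stable matching instances A and B on the same 4 workers and 4 firms, where B is obtained from A by changing the preference orders of exactly two workers and exactly two firms (all other agents have identical preference orders in A and B), together with matchings M₁ and M₂ stable under both A and B, such that M₁ ∨_A M₂ is not stable under B. Hence for instances that are (2,2), the set M_A ∩ M_B need not be a sublattice of the lattice of A-stable matchings. -/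
def Aw : Fin 4 → Fin 4 → Fin 4 :=
  ![![1,3,2,0], ![0,2,1,3], ![1,0,3,2], ![3,1,0,2]]

def Af : Fin 4 → Fin 4 → Fin 4 :=
  ![![0,1,2,3], ![0,3,2,1], ![2,3,0,1], ![2,0,3,1]]

def Bw : Fin 4 → Fin 4 → Fin 4 :=
  ![![0,3,1,2], ![3,0,1,2], ![1,0,3,2], ![3,1,0,2]]

def Bf : Fin 4 → Fin 4 → Fin 4 :=
  ![![1,0,2,3], ![0,3,2,1], ![2,3,0,1], ![0,2,1,3]]

def instA : SMInstance 4 :=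
  ⟨Aw, Af, by decide, by decide⟩

def instB : SMInstance 4 :=
  ⟨Bw, Bf, by decide, by decide⟩

instance {n : ℕ} (I : SMInstance n) (M : Fin n → Fin n) (w f : Fin n) :
    Decidable (Blocking I M w f) := by unfold Blocking; infer_instance

instance {n : ℕ} (I : SMInstance n) (M : Fin n → Fin n) :
    Decidable (IsStable I M) := by unfold IsStable; infer_instance

/-- there are instances A and B on 4 workers and 4 firms, differing in the
preferences of exactly two workers and exactly two firms, and matchings M₁, M₂ stable
under both A and B whose A-join is not stable under B; so for (2,2) instances the
intersection need not be a sublattice of the lattice of A-stable matchings. -/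
theorem stmt8 :
    ∃ (A B : SMInstance 4) (w₁ w₂ f₁ f₂ : Fin 4),
      w₁ ≠ w₂ ∧ f₁ ≠ f₂ ∧
      A.wRank w₁ ≠ B.wRank w₁ ∧ A.wRank w₂ ≠ B.wRank w₂ ∧
      (∀ w, w ≠ w₁ → w ≠ w₂ → A.wRank w = B.wRank w) ∧
      A.fRank f₁ ≠ B.fRank f₁ ∧ A.fRank f₂ ≠ B.fRank f₂ ∧
      (∀ f, f ≠ f₁ → f ≠ f₂ → A.fRank f = B.fRank f) ∧
      ∃ M₁ M₂ : Fin 4 → Fin 4,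
        (IsStable A M₁ ∧ IsStable B M₁) ∧ (IsStable A M₂ ∧ IsStable B M₂) ∧
        ¬ IsStable B (joinMap A M₁ M₂) := by
  refine ⟨instA, instB, 0, 1, 0, 3, by decide, by decide, ?_, ?_, ?_, ?_, ?_, ?_,
    ![0,3,1,2], ![3,0,2,1], ⟨?_, ?_⟩, ⟨?_, ?_⟩, ?_⟩ <;> decide
end
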